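/- If an R-module M has an ascending filtration by a countable sequence of submodules whose union is M and whose successive factors are each free filterable relative to P, then M itself is free filterable relative to P. -/

import Mathlib

/-!
STATEMENT 3.  If an `R`-module `M` has an ascending filtration by a countable
sequence of submodules (starting at `0`, with union `M`) whose successive
factors are each free filterable relative to `P`, then `M` is free filterable
relative to `P`.
-/

universe u v

/-- `M` is free filterable relative to the ideal `P`: an ascending chain of
finitely generated submodules starting at `0` with union `M` whose successive
factors are free `R⧸P`-modules. -/
def FreeFilterable (R : Type u) [CommRing R] (P : Ideal R)
    (M : Type v) [AddCommGroup M] [Module R M] : Prop :=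
  ∃ F : ℕ → Submodule R M,
    F 0 = ⊥ ∧
    (∀ n, F n ≤ F (n + 1)) ∧
    (∀ n, (F n).FG) ∧
    (⨆ n, F n) = ⊤ ∧
    ∀ n, ∃ ι : Type v,
      Nonempty ((↥(F (n + 1)) ⧸ Submodule.comap (F (n + 1)).subtype (F n))
        ≃ₗ[R] (ι →₀ R ⧸ P))

section Helpers
variable {R : Type u} [CommRing R] {M : Type v} [AddCommGroup M] [Module R M]
open Submodule Set

/-- trivial quotient -/
lemma quot_pempty (P : Ideal R) (K L : Submodule R M) (h : L ≤ K) :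
    Nonempty ((↥L ⧸ Submodule.comap L.subtype K) ≃ₗ[R] (PEmpty.{v+1} →₀ R ⧸ P)) := by
  have h1 : Submodule.comap L.subtype K = ⊤ := by
    rw [Submodule.comap_subtype_eq_top]; exact h
  have : Subsingleton (↥L ⧸ Submodule.comap L.subtype K) := by
    rw [Submodule.Quotient.subsingleton_iff]; exact h1
  exact ⟨LinearEquiv.ofSubsingleton _ _⟩

lemma quot_punit (P : Ideal R) (K L : Submodule R M) (w : M) (hw : w ∈ L)
    (hgen : L ≤ K ⊔ Submodule.span R {w})
    (hcolon : ∀ r : R, r • w ∈ K ↔ r ∈ P) :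
    Nonempty ((↥L ⧸ Submodule.comap L.subtype K) ≃ₗ[R] (PUnit.{v+1} →₀ R ⧸ P)) := by
  set K₀ : Submodule R ↥L := Submodule.comap L.subtype K
  let φ : R →ₗ[R] (↥L ⧸ K₀) := (Submodule.mkQ K₀) ∘ₗ (LinearMap.toSpanSingleton R ↥L ⟨w, hw⟩)
  have hker : LinearMap.ker φ = P := by
    ext r
    simp only [φ, LinearMap.mem_ker, LinearMap.coe_comp, Function.comp_apply,
      LinearMap.toSpanSingleton_apply, Submodule.mkQ_apply, Submodule.Quotient.mk_eq_zero]
    rw [← hcolon r]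
    simp [K₀, Submodule.mem_comap, Submodule.coe_smul]
  have hsurj : Function.Surjective φ := by
    intro q
    obtain ⟨⟨l, hl⟩, rfl⟩ := Submodule.mkQ_surjective K₀ q
    obtain ⟨k, hk, c, hc, hsum⟩ := Submodule.mem_sup.mp (hgen hl)
    obtain ⟨r, rfl⟩ := Submodule.mem_span_singleton.mp hc
    refine ⟨r, ?_⟩
    have : (⟨l, hl⟩ : ↥L) - r • ⟨w, hw⟩ ∈ K₀ := by
      simp only [K₀, Submodule.mem_comap]
      have : l - r • w = k := by rw [← hsum]; abel
      simpa [this] using hk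
    have := (Submodule.Quotient.eq K₀).mpr this
    simpa [φ] using this.symm
  refine ⟨?_⟩
  have e1 : (R ⧸ P) ≃ₗ[R] (↥L ⧸ K₀) := by
    have := φ.quotKerEquivOfSurjective hsurj
    rw [hker] at this; exact this
  exact e1.symm.trans (Finsupp.LinearEquiv.finsuppUnique R (R ⧸ P) PUnit.{v+1}).symm
lemma span_single_top (P : Ideal R) {ι : Type*} :
    Submodule.span R (Set.range fun i : ι => Finsupp.single i (1 : R ⧸ P)) = ⊤ := by
  have h1 : Submodule.span (R ⧸ P) (Set.range fun i : ι => Finsupp.single i (1 : R ⧸ P)) = ⊤ := by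
    have := (Finsupp.basisSingleOne (R := R ⧸ P) (ι := ι)).span_eq
    simpa using this
  have h2 := Submodule.restrictScalars_span R (R ⧸ P) Ideal.Quotient.mk_surjective
    (Set.range fun i : ι => Finsupp.single i (1 : R ⧸ P))
  rw [← h2, h1]; rfl

lemma smul_one_quot (P : Ideal R) (p : R) : p • (1 : R ⧸ P) = Ideal.Quotient.mk P p := by
  have : (1 : R ⧸ P) = Submodule.Quotient.mk (1 : R) := rfl
  rw [this, ← Submodule.Quotient.mk_smul, smul_eq_mul, mul_one]; rfl

lemma block_extract (P : Ideal R) (hP : P.IsPrime) (K L : Submodule R M) (hL : L.FG)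
    {ι : Type*} (e : (↥L ⧸ Submodule.comap L.subtype K) ≃ₗ[R] (ι →₀ R ⧸ P)) :
    ∃ (c : ℕ) (b : ℕ → M), (∀ i, b i ∈ L) ∧ (L ≤ K ⊔ Submodule.span R (b '' Set.Iio c)) ∧
      (∀ i, ∀ p ∈ P, p • b i ∈ K ⊔ Submodule.span R (b '' Set.Iio i)) ∧
      (∀ i < c, ∀ r : R, r • b i ∈ K ⊔ Submodule.span R (b '' Set.Iio i) → r ∈ P) := by
  haveI : Nontrivial (R ⧸ P) := Ideal.Quotient.nontrivial_iff.mpr hP.ne_top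
  set K₀ : Submodule R ↥L := Submodule.comap L.subtype K with hK₀
  -- finiteness of ι
  haveI : Module.Finite R ↥L := Module.Finite.iff_fg.mpr hL
  haveI : Module.Finite R (↥L ⧸ K₀) := Module.Finite.quotient R K₀
  haveI : Module.Finite R (ι →₀ R ⧸ P) := Module.Finite.equiv e
  haveI : Module.Finite (R ⧸ P) (ι →₀ R ⧸ P) :=
    Module.Finite.of_restrictScalars_finite R (R ⧸ P) (ι →₀ R ⧸ P)
  haveI : Finite ι := Module.Finite.finite_basis (Finsupp.basisSingleOne (R := R ⧸ P) (ι := ι))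
  haveI : Fintype ι := Fintype.ofFinite ι
  set c := Fintype.card ι with hc
  set eqv : ι ≃ Fin c := Fintype.equivFin ι with heqv
  -- lifts
  set q : Fin c → (↥L ⧸ K₀) := fun j => e.symm (Finsupp.single (eqv.symm j) 1) with hq
  have hlift : ∀ j : Fin c, ∃ w : ↥L, Submodule.Quotient.mk w = q j := fun j =>
    Submodule.Quotient.mk_surjective K₀ (q j)
  choose ℓ hℓ using hlift
  set b : ℕ → M := fun i => if h : i < c then ((ℓ ⟨i, h⟩ : ↥L) : M) else 0 with hb
  have hbmem : ∀ i, b i ∈ L := by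
    intro i; rw [hb]; dsimp only; split
    · exact (ℓ _).2
    · exact L.zero_mem
  -- image sets
  have hbimg : ∀ i ≤ c, b '' Set.Iio i = (fun j : Fin c => ((ℓ j : ↥L) : M)) '' {j | (j : ℕ) < i} := by
    intro i hi
    ext z; constructor
    · rintro ⟨t, ht, rfl⟩
      have htc : t < c := lt_of_lt_of_le ht hi
      exact ⟨⟨t, htc⟩, ht, by simp [hb, htc]⟩
    · rintro ⟨j, hj, rfl⟩
      exact ⟨(j : ℕ), hj, by simp [hb, j.2]⟩
  -- spanning in the quotient
  have hqspan : Submodule.span R (Set.range q) = ⊤ := by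
    have : Set.range q = ⇑e.symm '' (Set.range fun i : ι => Finsupp.single i (1 : R ⧸ P)) := by
      ext z; constructor
      · rintro ⟨j, rfl⟩; exact ⟨Finsupp.single (eqv.symm j) 1, ⟨eqv.symm j, rfl⟩, rfl⟩
      · rintro ⟨w, ⟨i, rfl⟩, rfl⟩; exact ⟨eqv i, by simp [hq]⟩
    rw [this, ← LinearEquiv.coe_coe, ← Submodule.map_span, span_single_top, Submodule.map_top]
    exact LinearEquiv.range e.symm
  -- (a) every element of L is in K₀ ⊔ span of the ℓ's
  have ha : ∀ w : ↥L, w ∈ K₀ ⊔ Submodule.span R (Set.range ℓ) := by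
    intro w
    have h1 : Submodule.Quotient.mk (p := K₀) w ∈ Submodule.map (Submodule.mkQ K₀)
        (Submodule.span R (Set.range ℓ)) := by
      rw [Submodule.map_span]
      have : ⇑(Submodule.mkQ K₀) '' Set.range ℓ = Set.range q := by
        ext z; constructor
        · rintro ⟨w', ⟨j, rfl⟩, rfl⟩; exact ⟨j, (hℓ j).symm⟩
        · rintro ⟨j, rfl⟩; exact ⟨ℓ j, ⟨j, rfl⟩, hℓ j⟩
      rw [this, hqspan]; exact Submodule.mem_top
    obtain ⟨w', hw', heq⟩ := Submodule.mem_map.mp h1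
    have : w - w' ∈ K₀ := by
      rw [← Submodule.Quotient.eq K₀]
      exact heq.symm
    have := Submodule.add_mem_sup this hw'
    simpa using this
  refine ⟨c, b, hbmem, ?_, ?_, ?_⟩
  · -- generation
    intro l hl
    have := ha ⟨l, hl⟩
    obtain ⟨u, hu, v, hv, huv⟩ := Submodule.mem_sup.mp this
    have hl2 : l = ((u : M)) + ((v : M)) := by
      rw [← Submodule.coe_add, huv]
    rw [hl2]
    refine Submodule.add_mem_sup hu.out ?_
    · have : ((v : ↥L) : M) ∈ Submodule.map L.subtype (Submodule.span R (Set.range ℓ)) :=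
        Submodule.mem_map_of_mem hv
      rw [Submodule.map_span] at this
      refine Submodule.span_mono ?_ this
      rintro z ⟨w', ⟨j, rfl⟩, rfl⟩
      rw [hbimg c le_rfl]
      exact ⟨j, j.2, rfl⟩
  · -- P kills
    intro i p hp
    by_cases hic : i < c
    · have h1 : p • q ⟨i, hic⟩ = 0 := by
        rw [hq]; dsimp only
        rw [← map_smul, Finsupp.smul_single, smul_one_quot,
          Ideal.Quotient.eq_zero_iff_mem.mpr hp, Finsupp.single_zero, map_zero]
      have h2 : Submodule.Quotient.mk (p := K₀) (p • ℓ ⟨i, hic⟩) = 0 := by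
        rw [Submodule.Quotient.mk_smul, hℓ, h1]
      have h3 : p • ℓ ⟨i, hic⟩ ∈ K₀ := (Submodule.Quotient.mk_eq_zero K₀).mp h2
      have h4 : p • b i ∈ K := by
        have : b i = ((ℓ ⟨i, hic⟩ : ↥L) : M) := by simp [hb, hic]
        rw [this, ← Submodule.coe_smul]
        exact h3
      exact Submodule.mem_sup_left h4
    · have : b i = 0 := by simp [hb, hic]
      rw [this, smul_zero]
      exact Submodule.zero_mem _
  · -- colon
    intro i hic r hr
    -- turn into statement inside ↥L
    obtain ⟨u, hu, v, hv, huv⟩ := Submodule.mem_sup.mp hr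
    have hbi : b i = ((ℓ ⟨i, hic⟩ : ↥L) : M) := by simp [hb, hic]
    have hvL : v ∈ L := by
      have : Submodule.span R (b '' Set.Iio i) ≤ L := by
        rw [Submodule.span_le]; rintro z ⟨t, _, rfl⟩; exact hbmem t
      exact this hv
    have hv' : (⟨v, hvL⟩ : ↥L) ∈ Submodule.span R (ℓ '' {j : Fin c | (j : ℕ) < i}) := by
      -- v ∈ span of b-image; pull back through injective subtype
      have himg : b '' Set.Iio i = ⇑L.subtype '' (ℓ '' {j : Fin c | (j : ℕ) < i}) := by
        rw [hbimg i (le_of_lt hic), Set.image_image]; rfl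
      have : v ∈ Submodule.map L.subtype (Submodule.span R (ℓ '' {j : Fin c | (j : ℕ) < i})) := by
        rw [Submodule.map_span, ← himg]; exact hv
      obtain ⟨v', hv'mem, hveq⟩ := Submodule.mem_map.mp this
      have : v' = ⟨v, hvL⟩ := Subtype.ext hveq
      rwa [← this]
    -- now mk both sides
    have hmk : Submodule.Quotient.mk (p := K₀) (r • ℓ ⟨i, hic⟩) =
        Submodule.Quotient.mk (p := K₀) ⟨v, hvL⟩ := by
      rw [Submodule.Quotient.eq]
      have : (((r • ℓ ⟨i, hic⟩ - ⟨v, hvL⟩ : ↥L)) : M) = u := by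
        rw [AddSubgroupClass.coe_sub, SetLike.val_smul, ← hbi, ← huv, add_sub_cancel_right]
      rw [hK₀, Submodule.mem_comap]
      rw [show L.subtype (r • ℓ ⟨i, hic⟩ - ⟨v, hvL⟩) = u from this]
      exact hu
    have hq1 : r • q ⟨i, hic⟩ ∈ Submodule.span R (q '' {j : Fin c | (j : ℕ) < i}) := by
      rw [← hℓ, ← Submodule.Quotient.mk_smul, hmk]
      have : Submodule.Quotient.mk (p := K₀) ⟨v, hvL⟩ ∈
          Submodule.map (Submodule.mkQ K₀) (Submodule.span R (ℓ '' {j : Fin c | (j : ℕ) < i})) :=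
        Submodule.mem_map_of_mem hv'
      rw [Submodule.map_span, Set.image_image] at this
      have himg2 : ((fun j : Fin c => Submodule.mkQ K₀ (ℓ j)) '' {j : Fin c | (j : ℕ) < i}) =
          q '' {j : Fin c | (j : ℕ) < i} :=
        Set.image_congr fun j _ => by rw [Submodule.mkQ_apply, hℓ]
      rwa [himg2] at this
    -- apply e and evaluate at the index
    have hq2 : r • Finsupp.single (eqv.symm ⟨i, hic⟩) (1 : R ⧸ P) ∈
        Submodule.span R ((fun j : Fin c => Finsupp.single (eqv.symm j) (1 : R ⧸ P)) ''
          {j : Fin c | (j : ℕ) < i}) := by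
      have := Submodule.mem_map_of_mem (f := e.toLinearMap) hq1
      rw [Submodule.map_span, Set.image_image] at this
      simp only [hq, map_smul, LinearEquiv.coe_coe, LinearEquiv.apply_symm_apply] at this
      exact this
    set ev : (ι →₀ R ⧸ P) →ₗ[R] R ⧸ P := Finsupp.lapply (eqv.symm ⟨i, hic⟩) with hev
    have hspan0 : Submodule.span R ((fun j : Fin c => Finsupp.single (eqv.symm j) (1 : R ⧸ P)) ''
        {j : Fin c | (j : ℕ) < i}) ≤ LinearMap.ker ev := by
      rw [Submodule.span_le]
      rintro z ⟨j, hj, rfl⟩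
      have hne : eqv.symm j ≠ eqv.symm ⟨i, hic⟩ := by
        intro h
        have := eqv.symm.injective h
        rw [Fin.ext_iff] at this
        exact absurd this (Nat.ne_of_lt hj)
      simp [ev, LinearMap.mem_ker, Finsupp.single_apply_eq_zero, hne]
    have := hspan0 hq2
    rw [LinearMap.mem_ker, map_smul, hev] at this
    simp only [Finsupp.lapply_apply, Finsupp.single_eq_same] at this
    rw [smul_one_quot] at this
    exact Ideal.Quotient.eq_zero_iff_mem.mp this

lemma span_image_succ (x : ℕ → M) (j : ℕ) :
    Submodule.span R (x '' Set.Iio (j + 1)) =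
      Submodule.span R (x '' Set.Iio j) ⊔ Submodule.span R {x j} := by
  have : x '' Set.Iio (j + 1) = insert (x j) (x '' Set.Iio j) := by
    ext z; simp only [Set.mem_image, Set.mem_Iio, Set.mem_insert_iff]
    constructor
    · rintro ⟨t, ht, rfl⟩
      rcases Nat.lt_succ_iff_lt_or_eq.mp ht with h | rfl
      · exact Or.inr ⟨t, h, rfl⟩
      · exact Or.inl rfl
    · rintro (rfl | ⟨t, ht, rfl⟩)
      · exact ⟨j, Nat.lt_succ_self j, rfl⟩
      · exact ⟨t, Nat.lt_succ_of_lt ht, rfl⟩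
  rw [this, Submodule.span_insert, sup_comm]

lemma seq_of_blocks {Q : Type v} [AddCommGroup Q] [Module R Q] (P : Ideal R)
    (F : ℕ → Submodule R Q) (hF0 : F 0 = ⊥) (hFmono : ∀ k, F k ≤ F (k + 1))
    (hFsup : (⨆ k, F k) = ⊤)
    (c : ℕ → ℕ) (b : ℕ → ℕ → Q)
    (hbmem : ∀ k i, b k i ∈ F (k + 1))
    (hbgen : ∀ k, F (k + 1) ≤ F k ⊔ Submodule.span R (b k '' Set.Iio (c k)))
    (hbP : ∀ k i, ∀ p ∈ P, p • b k i ∈ F k ⊔ Submodule.span R (b k '' Set.Iio i))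
    (hbcolon : ∀ k, ∀ i < c k, ∀ r : R, r • b k i ∈ F k ⊔ Submodule.span R (b k '' Set.Iio i)
      → r ∈ P) :
    ∃ x : ℕ → Q,
      (Submodule.span R (Set.range x) = ⊤) ∧
      (∀ j, ∀ p ∈ P, p • x j ∈ Submodule.span R (x '' Set.Iio j)) ∧
      (∀ j, ∀ r : R, r • x j ∈ Submodule.span R (x '' Set.Iio j) →
        r ∈ P ∨ x j ∈ Submodule.span R (x '' Set.Iio j)) := by
  classical
  set st : ℕ → ℕ × ℕ := fun j => Nat.rec (0, 0)
    (fun _ s => if s.2 + 1 < c s.1 then (s.1, s.2 + 1) else (s.1 + 1, 0)) j with hst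
  have hst0 : st 0 = (0, 0) := rfl
  have hstS : ∀ j, st (j + 1) =
      if (st j).2 + 1 < c (st j).1 then ((st j).1, (st j).2 + 1) else ((st j).1 + 1, 0) := by
    intro j; rfl
  set x : ℕ → Q := fun j => if (st j).2 < c (st j).1 then b (st j).1 (st j).2 else 0 with hx
  have hI1 : ∀ j, (st j).2 = 0 ∨ (st j).2 < c (st j).1 := by
    intro j; induction j with
    | zero => exact Or.inl rfl
    | succ j ih =>
      rw [hstS j]
      split
      · next h => exact Or.inr h
      · exact Or.inl rfl
  have hI2 : ∀ j, Submodule.span R (x '' Set.Iio j) =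
      F (st j).1 ⊔ Submodule.span R (b (st j).1 '' Set.Iio (st j).2) := by
    intro j; induction j with
    | zero =>
      rw [hst0, show Set.Iio 0 = (∅ : Set ℕ) from by ext t; simp]
      simp [hF0]
    | succ j ih =>
      rw [span_image_succ, ih, hstS j]
      by_cases hlt : (st j).2 < c (st j).1
      · have hxj : x j = b (st j).1 (st j).2 := by rw [hx]; simp [hlt]
        by_cases h2 : (st j).2 + 1 < c (st j).1
        · rw [if_pos h2]
          dsimp only
          rw [sup_assoc, hxj, ← span_image_succ]
        · rw [if_neg h2]
          dsimp only
          have hceq : (st j).2 + 1 = c (st j).1 := le_antisymm hlt (not_lt.mp h2)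
          rw [sup_assoc, hxj, ← span_image_succ, hceq]
          have himg : b ((st j).1 + 1) '' Set.Iio 0 = ∅ := by
            rw [show Set.Iio 0 = (∅ : Set ℕ) from by ext t; simp, Set.image_empty]
          rw [himg, Submodule.span_empty]
          rw [sup_bot_eq]
          apply le_antisymm
          · refine sup_le (hFmono _) ?_
            rw [Submodule.span_le]
            rintro z ⟨t, _, rfl⟩
            exact hbmem _ t
          · exact hbgen _
      · have h20 : (st j).2 = 0 := (hI1 j).resolve_right hlt
        have hc0 : c (st j).1 = 0 := by
          by_contra hne
          exact hlt (h20 ▸ Nat.pos_of_ne_zero hne)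
        have hxj : x j = 0 := by rw [hx]; simp [hlt]
        rw [if_neg (by omega)]
        dsimp only
        rw [hxj, Submodule.span_zero_singleton, sup_bot_eq, h20,
          show Set.Iio 0 = (∅ : Set ℕ) from by ext t; simp, Set.image_empty, Set.image_empty,
          Submodule.span_empty, sup_bot_eq, sup_bot_eq]
        apply le_antisymm (hFmono _)
        have := hbgen (st j).1
        rw [hc0, show Set.Iio 0 = (∅ : Set ℕ) from by ext t; simp, Set.image_empty,
          Submodule.span_empty, sup_bot_eq] at this
        exact this
  -- coverage
  have hcover : ∀ k, ∃ j, st j = (k, 0) := by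
    intro k; induction k with
    | zero => exact ⟨0, hst0⟩
    | succ k ih =>
      obtain ⟨j, hj⟩ := ih
      have hseg : ∀ i, i < c k → st (j + i) = (k, i) := by
        intro i; induction i with
        | zero => intro _; simpa using hj
        | succ i ihi =>
          intro hi
          have := ihi (Nat.lt_of_succ_lt hi)
          rw [show j + (i+1) = (j+i) + 1 from rfl, hstS, this]
          simp [hi]
      by_cases hck : c k = 0
      · refine ⟨j + 1, ?_⟩
        rw [hstS, hj]
        simp [hck]
      · refine ⟨j + c k, ?_⟩
        have hlast := hseg (c k - 1) (by omega)
        rw [show j + c k = (j + (c k - 1)) + 1 by omega, hstS, hlast]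
        simp [show ¬(c k - 1 + 1 < c k) by omega]
  refine ⟨x, ?_, ?_, ?_⟩
  · rw [eq_top_iff, ← hFsup]
    refine iSup_le fun k => ?_
    obtain ⟨j, hj⟩ := hcover k
    have := hI2 j
    rw [hj] at this
    have hFk : F k ≤ Submodule.span R (x '' Set.Iio j) := by
      rw [this]; simpa using le_sup_left
    refine le_trans hFk (Submodule.span_mono ?_)
    rintro z ⟨t, _, rfl⟩; exact ⟨t, rfl⟩
  · intro j p hp
    by_cases hlt : (st j).2 < c (st j).1
    · have hxj : x j = b (st j).1 (st j).2 := by rw [hx]; simp [hlt]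
      rw [hxj, hI2 j]
      exact hbP _ _ p hp
    · have hxj : x j = 0 := by rw [hx]; simp [hlt]
      rw [hxj, smul_zero]; exact Submodule.zero_mem _
  · intro j r hr
    by_cases hlt : (st j).2 < c (st j).1
    · have hxj : x j = b (st j).1 (st j).2 := by rw [hx]; simp [hlt]
      rw [hxj, hI2 j] at hr
      exact Or.inl (hbcolon _ _ hlt r hr)
    · have hxj : x j = 0 := by rw [hx]; simp [hlt]
      exact Or.inr (by rw [hxj]; exact Submodule.zero_mem _)

lemma seq_of_freeFilterable (P : Ideal R) (hP : P.IsPrime) {Q : Type v} [AddCommGroup Q]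
    [Module R Q] (h : FreeFilterable R P Q) :
    ∃ x : ℕ → Q,
      Submodule.span R (Set.range x) = ⊤ ∧
      (∀ j, ∀ p ∈ P, p • x j ∈ Submodule.span R (x '' Set.Iio j)) ∧
      (∀ j, ∀ r : R, r • x j ∈ Submodule.span R (x '' Set.Iio j) →
        r ∈ P ∨ x j ∈ Submodule.span R (x '' Set.Iio j)) := by
  obtain ⟨F, hF0, hFmono, hFfg, hFsup, hFq⟩ := h
  have hblocks : ∀ k, ∃ (c : ℕ) (b : ℕ → Q), (∀ i, b i ∈ F (k + 1)) ∧
      (F (k + 1) ≤ F k ⊔ Submodule.span R (b '' Set.Iio c)) ∧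
      (∀ i, ∀ p ∈ P, p • b i ∈ F k ⊔ Submodule.span R (b '' Set.Iio i)) ∧
      (∀ i < c, ∀ r : R, r • b i ∈ F k ⊔ Submodule.span R (b '' Set.Iio i) → r ∈ P) := by
    intro k
    obtain ⟨ι, he⟩ := hFq k
    exact block_extract P hP (F k) (F (k + 1)) (hFfg (k + 1)) he.some
  choose c b hbmem hbgen hbP hbcolon using hblocks
  exact seq_of_blocks P F hF0 hFmono hFsup c b hbmem hbgen hbP hbcolon

lemma finsupp_finset_sup_apply_le {α : Type*} (s : Finset α) (F : α → (ℕ →₀ ℕ)) (m : ℕ) (B : ℕ)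
    (h : ∀ a ∈ s, F a m ≤ B) : (s.sup F) m ≤ B := by
  classical
  induction s using Finset.induction_on with
  | empty => exact Nat.zero_le B
  | insert a s hnotmem ih =>
    rw [Finset.sup_insert, Finsupp.sup_apply]
    exact sup_le (h a (Finset.mem_insert_self a s))
      (ih fun b hb => h b (Finset.mem_insert_of_mem hb))

def IsStepF (f g : ℕ →₀ ℕ) : Prop := g = f ∨ ∃ n, g = f + Finsupp.single n 1

def ReachF (Good : (ℕ →₀ ℕ) → Prop) (f g : ℕ →₀ ℕ) : Prop :=
  ∃ (k : ℕ) (c : ℕ → (ℕ →₀ ℕ)), c 0 = f ∧ (∀ i, k ≤ i → c i = g) ∧ (∀ i, Good (c i)) ∧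
    ∀ i, IsStepF (c i) (c (i + 1))

lemma isStepF_le (f g : ℕ →₀ ℕ) (h : IsStepF f g) : f ≤ g := by
  rcases h with rfl | ⟨n, rfl⟩
  · exact le_rfl
  · exact Finsupp.le_def.mpr fun m => le_self_add

lemma chainF_le (c : ℕ → (ℕ →₀ ℕ)) (hc : ∀ i, IsStepF (c i) (c (i + 1))) :
    ∀ i i', i ≤ i' → c i ≤ c i' := by
  intro i i' h
  induction i' with
  | zero => rw [Nat.le_zero.mp h]
  | succ i' ihi =>
    by_cases h2 : i ≤ i'
    · exact le_trans (ihi h2) (isStepF_le _ _ (hc i'))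
    · rw [show i = i' + 1 by omega]

lemma reachF_le (Good : (ℕ →₀ ℕ) → Prop) (f g : ℕ →₀ ℕ) (h : ReachF Good f g) : f ≤ g := by
  obtain ⟨k, c, hc0, hck, _, hcs⟩ := h
  rw [← hc0, ← hck k le_rfl]
  exact chainF_le c hcs 0 k (Nat.zero_le k)

lemma reachF_good (Good : (ℕ →₀ ℕ) → Prop) (f g : ℕ →₀ ℕ) (h : ReachF Good f g) : Good g := by
  obtain ⟨k, c, hc0, hck, hgoods, _⟩ := h
  rw [← hck k le_rfl]; exact hgoods k

lemma reachF_refl (Good : (ℕ →₀ ℕ) → Prop) (f : ℕ →₀ ℕ) (hf : Good f) : ReachF Good f f :=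
  ⟨0, fun _ => f, rfl, fun _ _ => rfl, fun _ => hf, fun _ => Or.inl rfl⟩

lemma reachF_trans (Good : (ℕ →₀ ℕ) → Prop) (f g h : ℕ →₀ ℕ)
    (h1 : ReachF Good f g) (h2 : ReachF Good g h) : ReachF Good f h := by
  obtain ⟨k1, c1, hc10, hc1k, hg1, hs1⟩ := h1
  obtain ⟨k2, c2, hc20, hc2k, hg2, hs2⟩ := h2
  refine ⟨k1 + k2, fun i => if i < k1 then c1 i else c2 (i - k1), ?_, ?_, ?_, ?_⟩
  all_goals dsimp only
  · by_cases hk : 0 < k1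
    · rw [if_pos hk]; exact hc10
    · rw [if_neg hk, show 0 - k1 = 0 by omega, hc20, ← hc10, hc1k 0 (by omega)]
  · intro i hi
    rw [if_neg (by omega)]
    exact hc2k (i - k1) (by omega)
  · intro i
    by_cases hk : i < k1
    · rw [if_pos hk]; exact hg1 i
    · rw [if_neg hk]; exact hg2 _
  · intro i
    by_cases hA : i + 1 < k1
    · rw [if_pos (by omega), if_pos hA]; exact hs1 i
    · by_cases hB : i < k1
      · rw [if_pos hB, if_neg (by omega), show i + 1 - k1 = 0 by omega, hc20,
          ← hc1k (i + 1) (by omega)]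
        exact hs1 i
      · rw [if_neg hB, if_neg (by omega), show i + 1 - k1 = (i - k1) + 1 by omega]
        exact hs2 _

lemma reachF_step (Good : (ℕ →₀ ℕ) → Prop) (f : ℕ →₀ ℕ) (n : ℕ) (hf : Good f)
    (hg : Good (f + Finsupp.single n 1)) : ReachF Good f (f + Finsupp.single n 1) := by
  refine ⟨1, fun i => if i = 0 then f else f + Finsupp.single n 1,
    by dsimp only; rw [if_pos rfl],
    fun i hi => by dsimp only; rw [if_neg (by omega)], ?_, ?_⟩
  all_goals dsimp only
  · intro i
    by_cases h : i = 0
    · rw [if_pos h]; exact hf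
    · rw [if_neg h]; exact hg
  · intro i
    by_cases h : i = 0
    · rw [if_pos h, if_neg (by omega)]
      exact Or.inr ⟨n, rfl⟩
    · rw [if_neg h, if_neg (by omega)]
      exact Or.inl rfl

end Helpers

open Submodule Set in
theorem freeFilterable_of_filtration_freeFilterable
    {R : Type u} [CommRing R] [IsNoetherianRing R] (P : Ideal R) (hP : P.IsPrime)
    (M : Type v) [AddCommGroup M] [Module R M]
    (N : ℕ → Submodule R M)
    (h0 : N 0 = ⊥)
    (hmono : ∀ n, N n ≤ N (n + 1))
    (hsup : (⨆ n, N n) = ⊤)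
    (hfactors : ∀ n, FreeFilterable R P
      (↥(N (n + 1)) ⧸ Submodule.comap (N (n + 1)).subtype (N n))) :
    FreeFilterable R P M := by
  classical
  have Nmono : Monotone N := monotone_nat_of_le_succ hmono
  -- per-factor sequences
  choose x hxspan hxP hxcolon using fun n => seq_of_freeFilterable P hP (hfactors n)
  -- lifts
  have hlift : ∀ n j, ∃ w : ↥(N (n + 1)),
      Submodule.Quotient.mk (p := Submodule.comap (N (n + 1)).subtype (N n)) w = x n j :=
    fun n j => Submodule.Quotient.mk_surjective _ (x n j)
  choose yh hyh using hlift
  set y : ℕ → ℕ → M := fun n j => (yh n j : M) with hy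
  have C0 : ∀ n j, y n j ∈ N (n + 1) := fun n j => (yh n j).2
  set K0 : (n : ℕ) → Submodule R ↥(N (n + 1)) :=
    fun n => Submodule.comap (N (n + 1)).subtype (N n) with hK0
  set Sp : ℕ → ℕ → Submodule R M := fun n J => Submodule.span R (y n '' Set.Iio J) with hSp
  -- image lemma
  have himgS : ∀ n (S : Set ℕ),
      ⇑(Submodule.mkQ (K0 n)) '' (yh n '' S) = x n '' S := by
    intro n S
    rw [Set.image_image]
    exact Set.image_congr fun j _ => by rw [Submodule.mkQ_apply, hyh]
  have hySim : ∀ n (S : Set ℕ), ⇑(N (n + 1)).subtype '' (yh n '' S) = y n '' S := by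
    intro n S
    rw [Set.image_image]; rfl
  -- transfer up
  have TU : ∀ n (S : Set ℕ) (w : ↥(N (n + 1))),
      Submodule.Quotient.mk (p := K0 n) w ∈ Submodule.span R (x n '' S) →
      (w : M) ∈ N n ⊔ Submodule.span R (y n '' S) := by
    intro n S w hw
    have hmap : Submodule.span R (x n '' S) =
        Submodule.map (Submodule.mkQ (K0 n)) (Submodule.span R (yh n '' S)) := by
      rw [Submodule.map_span, himgS]
    rw [hmap] at hw
    obtain ⟨w', hw', heq⟩ := Submodule.mem_map.mp hw
    have hd : w' - w ∈ K0 n := by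
      rw [← Submodule.Quotient.eq (K0 n)]
      exact heq
    have hdN : ((w' - w : ↥(N (n + 1))) : M) ∈ N n := hd
    have hw'M : (w' : M) ∈ Submodule.span R (y n '' S) := by
      have : (w' : M) ∈ Submodule.map (N (n + 1)).subtype (Submodule.span R (yh n '' S)) :=
        Submodule.mem_map_of_mem hw'
      rwa [Submodule.map_span, hySim] at this
    have : (w : M) = -((w' - w : ↥(N (n + 1))) : M) + (w' : M) := by
      rw [AddSubgroupClass.coe_sub]; abel
    rw [this]
    exact Submodule.add_mem_sup (Submodule.neg_mem _ hdN) hw'M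
  -- transfer down
  have TD : ∀ n (S : Set ℕ) (w : ↥(N (n + 1))),
      (w : M) ∈ N n ⊔ Submodule.span R (y n '' S) →
      Submodule.Quotient.mk (p := K0 n) w ∈ Submodule.span R (x n '' S) := by
    intro n S w hw
    obtain ⟨u, hu, v, hv, huv⟩ := Submodule.mem_sup.mp hw
    have hvmap : v ∈ Submodule.map (N (n + 1)).subtype (Submodule.span R (yh n '' S)) := by
      rw [Submodule.map_span, hySim]; exact hv
    obtain ⟨v', hv', hveq⟩ := Submodule.mem_map.mp hvmap
    have hd : w - v' ∈ K0 n := by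
      have hveq' : (v' : M) = v := hveq
      have : ((w - v' : ↥(N (n + 1))) : M) = u := by
        rw [AddSubgroupClass.coe_sub, hveq', ← huv]; abel
      show ((w - v' : ↥(N (n + 1))) : M) ∈ N n
      rw [this]; exact hu
    have : Submodule.Quotient.mk (p := K0 n) w = Submodule.Quotient.mk (p := K0 n) v' :=
      (Submodule.Quotient.eq (K0 n)).mpr hd
    rw [this]
    have : Submodule.Quotient.mk (p := K0 n) v' ∈
        Submodule.map (Submodule.mkQ (K0 n)) (Submodule.span R (yh n '' S)) :=
      Submodule.mem_map_of_mem hv'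
    rwa [Submodule.map_span, himgS] at this
  -- the three facts in M
  have C1 : ∀ n j, ∀ p ∈ P, p • y n j ∈ N n ⊔ Sp n j := by
    intro n j p hp
    have h1 : Submodule.Quotient.mk (p := K0 n) (p • yh n j) ∈
        Submodule.span R (x n '' Set.Iio j) := by
      rw [Submodule.Quotient.mk_smul, hyh]
      exact hxP n j p hp
    have := TU n (Set.Iio j) (p • yh n j) h1
    simpa using this
  have C2 : ∀ n j (r : R), r • y n j ∈ N n ⊔ Sp n j →
      r ∈ P ∨ y n j ∈ N n ⊔ Sp n j := by
    intro n j r hr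
    have h1 : ((r • yh n j : ↥(N (n + 1))) : M) ∈ N n ⊔ Sp n j := by simpa using hr
    have h2 := TD n (Set.Iio j) (r • yh n j) h1
    rw [Submodule.Quotient.mk_smul, hyh] at h2
    rcases hxcolon n j r h2 with h | h
    · exact Or.inl h
    · exact Or.inr (TU n (Set.Iio j) (yh n j) (by rw [hyh]; exact h))
  have C3 : ∀ n, ∀ z ∈ N (n + 1), ∃ J, z ∈ N n ⊔ Sp n J := by
    intro n z hz
    have h1 : Submodule.Quotient.mk (p := K0 n) ⟨z, hz⟩ ∈
        Submodule.span R (Set.range (x n)) := by rw [hxspan n]; exact Submodule.mem_top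
    have hrange : Set.range (x n) = ⋃ J, x n '' Set.Iio J := by
      ext w; constructor
      · rintro ⟨j, rfl⟩
        exact Set.mem_iUnion.mpr ⟨j + 1, ⟨j, Nat.lt_succ_self j, rfl⟩⟩
      · rintro hw
        obtain ⟨J, j, _, rfl⟩ := by simpa using hw
        exact ⟨j, rfl⟩
    rw [hrange, Submodule.span_iUnion] at h1
    have hdir : Directed (· ≤ ·) (fun J => Submodule.span R (x n '' Set.Iio J)) := by
      apply Monotone.directed_le
      intro J1 J2 h
      exact Submodule.span_mono (Set.image_mono (fun t ht => lt_of_lt_of_le ht h))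
    obtain ⟨J, hJ⟩ := (Submodule.mem_iSup_of_directed _ hdir).mp h1
    exact ⟨J, TU n (Set.Iio J) ⟨z, hz⟩ hJ⟩
  -- Tspan machinery
  set Tspan : (ℕ →₀ ℕ) → Submodule R M := fun f => ⨆ n, Sp n (f n) with hTspan
  have hSpmono : ∀ n, Monotone (Sp n) := fun n J1 J2 h =>
    Submodule.span_mono (Set.image_mono (fun t ht => lt_of_lt_of_le ht h))
  have hSpN : ∀ n J, Sp n J ≤ N (n + 1) := by
    intro n J
    rw [hSp]; dsimp only
    rw [Submodule.span_le]
    rintro z ⟨t, _, rfl⟩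
    exact C0 n t
  have hSp0 : ∀ n, Sp n 0 = ⊥ := by
    intro n
    rw [hSp]; dsimp only
    rw [show Set.Iio 0 = (∅ : Set ℕ) from by ext t; simp, Set.image_empty, Submodule.span_empty]
  have hTmono : ∀ f g : ℕ →₀ ℕ, f ≤ g → Tspan f ≤ Tspan g := fun f g h =>
    iSup_mono fun n => hSpmono n (Finsupp.le_def.mp h n)
  have hT0 : Tspan 0 = ⊥ := by
    rw [hTspan]; dsimp only
    simp [hSp0]
  have hTsingle : ∀ (f : ℕ →₀ ℕ) n, Sp n (f n) ≤ Tspan f := fun f n =>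
    le_iSup (fun n => Sp n (f n)) n
  have hTsucc : ∀ (f : ℕ →₀ ℕ) n₀, Tspan (f + Finsupp.single n₀ 1) =
      Tspan f ⊔ Submodule.span R {y n₀ (f n₀)} := by
    intro f n₀
    have happ : ∀ n, ((f + Finsupp.single n₀ 1 : ℕ →₀ ℕ)) n = if n = n₀ then f n + 1 else f n := by
      intro n
      rw [Finsupp.add_apply, Finsupp.single_apply]
      by_cases h : n = n₀
      · subst h; simp
      · simp [h, Ne.symm h]
    apply le_antisymm
    · refine iSup_le fun n => ?_
      rw [happ n]
      by_cases h : n = n₀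
      · subst h
        rw [if_pos rfl]
        have : Sp n (f n + 1) = Sp n (f n) ⊔ Submodule.span R {y n (f n)} :=
          span_image_succ (y n) (f n)
        rw [this]
        exact sup_le_sup (hTsingle f n) le_rfl
      · rw [if_neg h]
        exact le_trans (hTsingle f n) le_sup_left
    · refine sup_le ?_ ?_
      · refine iSup_le fun n => le_trans ?_ (le_iSup _ n)
        rw [happ n]
        split
        · exact hSpmono n (Nat.le_succ _)
        · exact le_rfl
      · refine le_trans ?_ (le_iSup _ n₀)
        rw [happ n₀, if_pos rfl]
        refine le_trans ?_ (hSpmono n₀ le_rfl)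
        rw [Submodule.span_le]
        rintro z hz
        rw [Set.mem_singleton_iff] at hz
        subst hz
        exact Submodule.subset_span ⟨f n₀, Nat.lt_succ_self _, rfl⟩
  have hTfg : ∀ f : ℕ →₀ ℕ, (Tspan f).FG := by
    intro f
    have heq : Tspan f = Submodule.span R (⋃ n ∈ f.support, y n '' Set.Iio (f n)) := by
      rw [Submodule.span_iUnion₂]
      apply le_antisymm
      · refine iSup_le fun n => ?_
        by_cases h : n ∈ f.support
        · exact le_trans le_rfl (le_iSup₂ (f := fun n _ => Sp n (f n)) n h)
        · have : f n = 0 := Finsupp.notMem_support_iff.mp h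
          rw [this, hSp0]
          exact bot_le
      · exact iSup₂_le fun n _ => hTsingle f n
    rw [heq]
    apply Submodule.fg_span
    exact Set.Finite.biUnion f.support.finite_toSet
      (fun n _ => Set.Finite.image _ (Set.finite_Iio (f n)))
  -- building blocks towards dependency functions
  have fact1 : ∀ n, ∀ z ∈ N n, ∃ g : ℕ →₀ ℕ, (∀ m, n ≤ m → g m = 0) ∧ z ∈ Tspan g := by
    intro n
    induction n with
    | zero =>
      intro z hz
      rw [h0, Submodule.mem_bot] at hz
      exact ⟨0, fun m _ => rfl, by rw [hz]; exact Submodule.zero_mem _⟩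
    | succ n ih =>
      intro z hz
      obtain ⟨J, hJ⟩ := C3 n z hz
      obtain ⟨u, hu, v, hv, huv⟩ := Submodule.mem_sup.mp hJ
      obtain ⟨g₀, hg₀supp, hg₀⟩ := ih u hu
      have hg0n : g₀ n = 0 := hg₀supp n le_rfl
      refine ⟨g₀ + Finsupp.single n J, ?_, ?_⟩
      · intro m hm
        rw [Finsupp.add_apply, hg₀supp m (by omega), Finsupp.single_apply,
          if_neg (by omega), add_zero]
      · rw [← huv]
        refine Submodule.add_mem _ (hTmono g₀ _ (Finsupp.le_def.mpr fun m => le_self_add) hg₀) ?_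
        refine le_trans ?_ (hTsingle (g₀ + Finsupp.single n J) n) hv
        rw [Finsupp.add_apply, hg0n, Finsupp.single_apply, if_pos rfl, zero_add]
  -- dependency functions
  obtain ⟨pg, hpg⟩ : P.FG := IsNoetherian.noetherian P
  have hdep : ∀ n j, ∃ δ : ℕ →₀ ℕ, (∀ m, n < m → δ m = 0) ∧ δ n ≤ j ∧
      (∀ p ∈ P, p • y n j ∈ Tspan δ) ∧
      (y n j ∈ N n ⊔ Sp n j → y n j ∈ Tspan δ) := by
    intro n j
    have hone : ∀ z : M, z ∈ N n ⊔ Sp n j → ∃ δ : ℕ →₀ ℕ, (∀ m, n < m → δ m = 0) ∧ δ n ≤ j ∧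
        z ∈ Tspan δ := by
      intro z hz
      obtain ⟨u, hu, v, hv, huv⟩ := Submodule.mem_sup.mp hz
      obtain ⟨g₀, hg₀supp, hg₀⟩ := fact1 n u hu
      have hg0n : g₀ n = 0 := hg₀supp n le_rfl
      have happ : ∀ m, ((g₀ + Finsupp.single n j : ℕ →₀ ℕ)) m = if m = n then j else g₀ m := by
        intro m
        rw [Finsupp.add_apply, Finsupp.single_apply]
        by_cases h : m = n
        · subst h; simp [hg0n, if_pos rfl]
        · simp [h, if_neg (Ne.symm h)]
      refine ⟨g₀ + Finsupp.single n j, ?_, ?_, ?_⟩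
      · intro m hm
        rw [happ m, if_neg (by omega)]
        exact hg₀supp m (by omega)
      · rw [happ n, if_pos rfl]
      · rw [← huv]
        refine Submodule.add_mem _
          (hTmono g₀ _ (Finsupp.le_def.mpr fun m => le_self_add) hg₀) ?_
        refine le_trans ?_ (hTsingle (g₀ + Finsupp.single n j) n) hv
        rw [happ n, if_pos rfl]
    -- generators of P
    have hgen : ∀ p : { q // q ∈ pg }, ∃ δ : ℕ →₀ ℕ, (∀ m, n < m → δ m = 0) ∧ δ n ≤ j ∧
        p.1 • y n j ∈ Tspan δ := by
      intro p
      have hpP : p.1 ∈ P := by rw [← hpg]; exact Submodule.subset_span p.2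
      exact hone _ (C1 n j p.1 hpP)
    choose δg hδ1 hδ2 hδ3 using hgen
    have hclosure : ∀ δ : ℕ →₀ ℕ, (∀ p : {q // q ∈ pg}, δg p ≤ δ) →
        ∀ p ∈ P, p • y n j ∈ Tspan δ := by
      intro δ hle p hp
      rw [← hpg] at hp
      refine Submodule.span_induction ?_ ?_ ?_ ?_ hp
      · intro q hq
        exact hTmono _ _ (hle ⟨q, hq⟩) (hδ3 ⟨q, hq⟩)
      · rw [zero_smul]; exact Submodule.zero_mem _
      · intro q q' _ _ hq hq'
        rw [add_smul]; exact Submodule.add_mem _ hq hq'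
      · intro r q _ hq
        rw [smul_eq_mul, mul_smul]; exact Submodule.smul_mem _ r hq
    by_cases hred : y n j ∈ N n ⊔ Sp n j
    · obtain ⟨δr, hδr1, hδr2, hδr3⟩ := hone _ hred
      set δ : ℕ →₀ ℕ := (Finset.univ.sup δg) ⊔ δr with hδdef
      have hle : ∀ p, δg p ≤ δ := fun p =>
        le_trans (Finset.le_sup (Finset.mem_univ p)) le_sup_left
      have hler : δr ≤ δ := le_sup_right
      refine ⟨δ, ?_, ?_, hclosure δ hle, fun _ => hTmono _ _ hler hδr3⟩
      · intro m hm
        have h1 : δ m ≤ 0 := by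
          rw [hδdef, Finsupp.sup_apply]
          exact sup_le (finsupp_finset_sup_apply_le _ _ _ _
            (fun p _ => le_of_eq (hδ1 p m hm))) (le_of_eq (hδr1 m hm))
        omega
      · rw [hδdef, Finsupp.sup_apply]
        exact sup_le (finsupp_finset_sup_apply_le _ _ _ _ (fun p _ => hδ2 p)) hδr2
    · set δ : ℕ →₀ ℕ := Finset.univ.sup δg with hδdef
      have hle : ∀ p, δg p ≤ δ := fun p => Finset.le_sup (Finset.mem_univ p)
      refine ⟨δ, ?_, ?_, hclosure δ hle, fun h => absurd h hred⟩
      · intro m hm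
        have h1 : δ m ≤ 0 :=
          finsupp_finset_sup_apply_le _ _ _ _ (fun p _ => le_of_eq (hδ1 p m hm))
        omega
      · exact finsupp_finset_sup_apply_le _ _ _ _ (fun p _ => hδ2 p)
  choose Dfun hD1 hD2 hD3 hD4 using hdep
  set Good : (ℕ →₀ ℕ) → Prop := fun f => ∀ n j, j < f n → Dfun n j ≤ f with hGoodDef
  set wt : (ℕ →₀ ℕ) → ℕ := fun f => f.sum fun _ v => v with hwtdef
  have hwt_add : ∀ (f : ℕ →₀ ℕ) n, wt (f + Finsupp.single n 1) = wt f + 1 := by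
    intro f n
    rw [hwtdef]
    dsimp only
    rw [Finsupp.sum_add_index' (fun a => rfl) (fun a b₁ b₂ => rfl),
      Finsupp.sum_single_index rfl]
  have RW : ∀ (μ : ℕ) (f : ℕ →₀ ℕ), wt f = μ → Good f → ∀ n₀, ∀ z ∈ Tspan f,
      z ∈ N (n₀ + 1) → z ∈ Tspan (f.filter (fun m => m ≤ n₀)) := by
    intro μ
    induction μ using Nat.strong_induction_on with
    | _ μ ih =>
      intro f hwt hgood n₀ z hzT hzN
      by_cases htop : ∀ m, n₀ < m → f m = 0
      · have hfix : f.filter (fun m => m ≤ n₀) = f := by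
          ext m
          rw [Finsupp.filter_apply]
          split
          · rfl
          · next h => exact (htop m (by omega)).symm
        rwa [hfix]
      · push_neg at htop
        set sup := f.support.filter (fun m => n₀ < m) with hsupdef
        have hsupne : sup.Nonempty := by
          obtain ⟨m, hm1, hm2⟩ := htop
          exact ⟨m, Finset.mem_filter.mpr ⟨Finsupp.mem_support_iff.mpr hm2, hm1⟩⟩
        set nst := sup.max' hsupne with hnst
        have hnstmem := sup.max'_mem hsupne
        have hnstgt : n₀ < nst := (Finset.mem_filter.mp hnstmem).2
        have hfnst : f nst ≠ 0 := Finsupp.mem_support_iff.mp (Finset.mem_filter.mp hnstmem).1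
        have htopmax : ∀ m, nst < m → f m = 0 := by
          intro m hm
          by_contra hne
          have hmem : m ∈ sup :=
            Finset.mem_filter.mpr ⟨Finsupp.mem_support_iff.mpr hne, by omega⟩
          have := Finset.le_max' sup m hmem
          omega
        set f' := f - Finsupp.single nst 1 with hf'
        have hf'app : ∀ m, f' m = if m = nst then f nst - 1 else f m := by
          intro m
          rw [hf', Finsupp.tsub_apply, Finsupp.single_apply]
          by_cases h : m = nst
          · subst h; rw [if_pos rfl, if_pos rfl]
          · rw [if_neg (fun hh => h hh.symm), if_neg h, Nat.sub_zero]
        have hf'nst : f' nst = f nst - 1 := by rw [hf'app]; rw [if_pos rfl]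
        have hfeq : f = f' + Finsupp.single nst 1 := by
          ext m
          rw [Finsupp.add_apply, hf'app m, Finsupp.single_apply]
          by_cases h : m = nst
          · subst h; rw [if_pos rfl, if_pos rfl]; omega
          · rw [if_neg h, if_neg (fun hh => h hh.symm), add_zero]
        have hwt' : wt f' < μ := by
          have h2 := hwt_add f' nst
          rw [← hfeq] at h2
          omega
        have hgood' : Good f' := by
          intro n j hj
          have hf'n := hf'app n
          have hjf : j < f n := by
            by_cases h : n = nst
            · rw [if_pos h, ← h] at hf'n; omega
            · rw [if_neg h] at hf'n; omega
          have hD := hgood n j hjf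
          refine Finsupp.le_def.mpr fun m => ?_
          rw [hf'app m]
          by_cases h : m = nst
          · rw [if_pos h]
            rcases lt_trichotomy n nst with hlt | heq | hgt
            · rw [h, hD1 n j nst hlt]
              omega
            · have h6 : Dfun n j n ≤ j := hD2 n j
              rw [if_pos heq] at hf'n
              rw [← heq] at hf'n
              rw [h, ← heq]
              omega
            · exfalso
              have h7 : f n = 0 := htopmax n hgt
              omega
          · rw [if_neg h]
            exact Finsupp.le_def.mp hD m
        have hdecomp : Tspan f = Tspan f' ⊔ Submodule.span R {y nst (f' nst)} := by
          conv_lhs => rw [hfeq]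
          exact hTsucc f' nst
        rw [hdecomp] at hzT
        obtain ⟨a, ha, w, hw, haw⟩ := Submodule.mem_sup.mp hzT
        obtain ⟨r, rfl⟩ := Submodule.mem_span_singleton.mp hw
        have haN : Tspan f' ≤ N nst ⊔ Sp nst (f' nst) := by
          refine iSup_le fun n => ?_
          rcases lt_trichotomy n nst with hlt | heq | hgt
          · exact le_trans (le_trans (hSpN n (f' n)) (Nmono (by omega))) le_sup_left
          · subst heq; exact le_sup_right
          · have h1 : f' n = 0 := by
              rw [hf'app, if_neg (by omega)]
              exact htopmax n hgt
            rw [h1, hSp0]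
            exact bot_le
        have hzNst : z ∈ N nst := Nmono (by omega : n₀ + 1 ≤ nst) hzN
        have hrw : r • y nst (f' nst) ∈ N nst ⊔ Sp nst (f' nst) := by
          have heq2 : r • y nst (f' nst) = z - a := by rw [← haw]; abel
          rw [heq2]
          exact Submodule.sub_mem _ (Submodule.mem_sup_left hzNst) (haN ha)
        have hDle : Dfun nst (f' nst) ≤ f' := by
          have hD := hgood nst (f' nst) (by omega)
          refine Finsupp.le_def.mpr fun m => ?_
          rw [hf'app m]
          by_cases h : m = nst
          · rw [if_pos h, h]
            have h6 := hD2 nst (f' nst)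
            omega
          · rw [if_neg h]
            exact Finsupp.le_def.mp hD m
        have hry : r • y nst (f' nst) ∈ Tspan f' := by
          rcases C2 nst (f' nst) r hrw with hrP | hred
          · exact hTmono _ _ hDle (hD3 nst (f' nst) r hrP)
          · exact Submodule.smul_mem _ r (hTmono _ _ hDle (hD4 nst (f' nst) hred))
        have hzT' : z ∈ Tspan f' := by
          rw [← haw]
          exact Submodule.add_mem _ ha hry
        have hfilt : f'.filter (fun m => m ≤ n₀) = f.filter (fun m => m ≤ n₀) := by
          ext m
          rw [Finsupp.filter_apply, Finsupp.filter_apply]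
          split
          · next h => rw [hf'app m, if_neg (by omega)]
          · rfl
        rw [← hfilt]
        exact ih (wt f') hwt' f' rfl hgood' n₀ z hzT' hzN
  have hGood0 : Good 0 := by
    intro n j hj
    simp at hj
  have hgood_succ : ∀ (f : ℕ →₀ ℕ) n₀, Good f → Dfun n₀ (f n₀) ≤ f + Finsupp.single n₀ 1 →
      Good (f + Finsupp.single n₀ 1) := by
    intro f n₀ hf hD n j hj
    have happ : ∀ m : ℕ, ((f + Finsupp.single n₀ 1 : ℕ →₀ ℕ)) m =
        if n₀ = m then f m + 1 else f m := by
      intro m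
      rw [Finsupp.add_apply, Finsupp.single_apply]
      split <;> omega
    rw [happ n] at hj
    have hself : f ≤ f + Finsupp.single n₀ 1 := Finsupp.le_def.mpr fun m => le_self_add
    by_cases h : n₀ = n
    · rw [if_pos h] at hj
      by_cases h2 : j < f n
      · exact le_trans (hf n j h2) hself
      · have hje : j = f n := by omega
        rw [hje, ← h]
        exact hD
    · rw [if_neg h] at hj
      exact le_trans (hf n j hj) hself
  -- L2 statements
  set L2 : ℕ → Prop := fun n₀ => ∀ f, Good f → ∀ t : ℕ →₀ ℕ, (∀ m, n₀ ≤ m → t m = 0) →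
    ∃ g, ReachF Good f g ∧ t ≤ g ∧ ∀ m, n₀ ≤ m → g m = f m with hL2def
  have hL1fromL2 : ∀ k, L2 k → ∀ f, Good f → ∃ g, ReachF Good f g ∧ g k = f k + 1 ∧
      ∀ m, k < m → g m = f m := by
    intro k hk f hf
    obtain ⟨g₁, hr1, hd1, he1⟩ := hk f hf ((Dfun k (f k)).filter (fun m => m < k))
      (fun m hm => by rw [Finsupp.filter_apply, if_neg (by omega)])
    have hg₁k : g₁ k = f k := he1 k le_rfl
    have hgoodg₁ : Good g₁ := reachF_good Good f g₁ hr1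
    have hDle2 : Dfun k (g₁ k) ≤ g₁ + Finsupp.single k 1 := by
      rw [hg₁k]
      refine Finsupp.le_def.mpr fun m => ?_
      have hmono2 : g₁ m ≤ ((g₁ + Finsupp.single k 1 : ℕ →₀ ℕ)) m := by
        rw [Finsupp.add_apply]; exact le_self_add
      rcases lt_trichotomy m k with hlt | heq | hgt
      · have hfl : Dfun k (f k) m = ((Dfun k (f k)).filter (fun m => m < k)) m := by
          rw [Finsupp.filter_apply, if_pos hlt]
        rw [hfl]
        exact le_trans (Finsupp.le_def.mp hd1 m) hmono2
      · rw [heq, Finsupp.add_apply, Finsupp.single_apply, if_pos rfl]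
        have := hD2 k (f k)
        omega
      · rw [hD1 k (f k) m hgt]
        exact Nat.zero_le _
    have hgood2 : Good (g₁ + Finsupp.single k 1) := hgood_succ g₁ k hgoodg₁ hDle2
    refine ⟨g₁ + Finsupp.single k 1,
      reachF_trans Good _ _ _ hr1 (reachF_step Good g₁ k hgoodg₁ hgood2), ?_, ?_⟩
    · rw [Finsupp.add_apply, Finsupp.single_apply, if_pos rfl, hg₁k]
    · intro m hm
      rw [Finsupp.add_apply, Finsupp.single_apply, if_neg (by omega), add_zero]
      exact he1 m (by omega)
  have hL2 : ∀ n₀, L2 n₀ := by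
    intro n₀
    induction n₀ with
    | zero =>
      intro f hf t ht
      refine ⟨f, reachF_refl Good f hf, ?_, fun m _ => rfl⟩
      exact Finsupp.le_def.mpr fun m => by rw [ht m (Nat.zero_le m)]; exact Nat.zero_le _
    | succ n₀ ih =>
      intro f hf t ht
      have hiter : ∀ (k : ℕ), ∀ f, Good f → ∃ g, ReachF Good f g ∧ g n₀ = f n₀ + k ∧
          ∀ m, n₀ < m → g m = f m := by
        intro k
        induction k with
        | zero => intro f hf; exact ⟨f, reachF_refl Good f hf, rfl, fun m _ => rfl⟩
        | succ k ihk =>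
          intro f hf
          obtain ⟨g, hrg, hg1, hg2⟩ := ihk f hf
          obtain ⟨g', hrg', hg'1, hg'2⟩ := hL1fromL2 n₀ ih g (reachF_good Good f g hrg)
          exact ⟨g', reachF_trans Good _ _ _ hrg hrg', by omega,
            fun m hm => by rw [hg'2 m hm, hg2 m hm]⟩
      obtain ⟨g₁, hr1, hg₁n, hg₁m⟩ := hiter (t n₀) f hf
      obtain ⟨g, hr2, htle, hgm⟩ := ih g₁ (reachF_good Good f g₁ hr1)
        (t.filter (fun m => m < n₀))
        (fun m hm => by rw [Finsupp.filter_apply, if_neg (by omega)])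
      refine ⟨g, reachF_trans Good _ _ _ hr1 hr2, ?_, ?_⟩
      · refine Finsupp.le_def.mpr fun m => ?_
        rcases lt_trichotomy m n₀ with hlt | heq | hgt
        · have hfl : t m = (t.filter (fun m => m < n₀)) m := by
            rw [Finsupp.filter_apply, if_pos hlt]
          rw [hfl]
          exact Finsupp.le_def.mp htle m
        · rw [heq, hgm n₀ le_rfl]
          omega
        · rw [ht m (by omega)]
          exact Nat.zero_le _
      · intro m hm
        rw [hgm m (by omega), hg₁m m (by omega)]
  -- stage targets
  have hstage : ∀ f, Good f → ∀ s : ℕ, ∃ g, ReachF Good f g ∧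
      (Nat.unpair s).2 < g (Nat.unpair s).1 := by
    intro f hf s
    obtain ⟨g, hr, hle, _⟩ := hL2 ((Nat.unpair s).1 + 1) f hf
      (Finsupp.single (Nat.unpair s).1 ((Nat.unpair s).2 + 1))
      (fun m hm => by rw [Finsupp.single_apply, if_neg (by omega)])
    refine ⟨g, hr, ?_⟩
    have := Finsupp.le_def.mp hle (Nat.unpair s).1
    rw [Finsupp.single_apply, if_pos rfl] at this
    omega
  set gs : ℕ → {f : ℕ →₀ ℕ // Good f} := fun s => Nat.rec
    ⟨0, hGood0⟩ (fun s prev => ⟨Classical.choose (hstage prev.1 prev.2 s),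
      reachF_good Good prev.1 _ (Classical.choose_spec (hstage prev.1 prev.2 s)).1⟩) s
    with hgsdef
  have hgs0 : (gs 0).1 = 0 := rfl
  have hgschain : ∀ s, ReachF Good (gs s).1 (gs (s + 1)).1 :=
    fun s => (Classical.choose_spec (hstage (gs s).1 (gs s).2 s)).1
  have hgscof : ∀ n j, ∃ s, j < (gs s).1 n := by
    intro n j
    refine ⟨Nat.pair n j + 1, ?_⟩
    have := (Classical.choose_spec
      (hstage (gs (Nat.pair n j)).1 (gs (Nat.pair n j)).2 (Nat.pair n j))).2
    change (Nat.unpair (Nat.pair n j)).2 < (gs (Nat.pair n j + 1)).1 (Nat.unpair (Nat.pair n j)).1 at this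
    rw [Nat.unpair_pair] at this
    exact this
  -- splice the chains into one sequence
  have hchains : ∀ s, ∃ (k : ℕ) (c : ℕ → (ℕ →₀ ℕ)), c 0 = (gs s).1 ∧
      (∀ i, k ≤ i → c i = (gs (s + 1)).1) ∧ (∀ i, Good (c i)) ∧
      (∀ i, IsStepF (c i) (c (i + 1))) ∧ 1 ≤ k := by
    intro s
    obtain ⟨k, c, h1, h2, h3, h4⟩ := hgschain s
    exact ⟨k + 1, c, h1, fun i hi => h2 i (by omega), h3, h4, by omega⟩
  choose ks cs hcs0 hcsk hcsg hcss hks using hchains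
  set st : ℕ → ℕ × ℕ := fun m => Nat.rec (0, 0)
    (fun _ s => if s.2 + 1 < ks s.1 then (s.1, s.2 + 1) else (s.1 + 1, 0)) m with hstdef
  have hst0 : st 0 = (0, 0) := rfl
  have hstS : ∀ m, st (m + 1) =
      if (st m).2 + 1 < ks (st m).1 then ((st m).1, (st m).2 + 1) else ((st m).1 + 1, 0) :=
    fun m => rfl
  set F : ℕ → (ℕ →₀ ℕ) := fun m => cs (st m).1 (st m).2 with hFdef
  have hF0 : F 0 = 0 := by
    rw [hFdef]
    dsimp only
    rw [hst0]
    rw [show ((0, 0) : ℕ × ℕ).1 = 0 from rfl, show ((0, 0) : ℕ × ℕ).2 = 0 from rfl,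
      hcs0 0, hgs0]
  have hFstep : ∀ m, IsStepF (F m) (F (m + 1)) := by
    intro m
    rw [hFdef]
    dsimp only
    rw [hstS m]
    by_cases h : (st m).2 + 1 < ks (st m).1
    · rw [if_pos h]
      exact hcss (st m).1 (st m).2
    · rw [if_neg h]
      have e1 : cs ((st m).1 + 1) (((st m).1 + 1, 0).2 : ℕ) = (gs ((st m).1 + 1)).1 := hcs0 _
      have e2 : cs (st m).1 ((st m).2 + 1) = (gs ((st m).1 + 1)).1 := hcsk _ _ (by omega)
      rw [show ((st m).1 + 1, 0).1 = (st m).1 + 1 from rfl]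
      rw [e1, ← e2]
      exact hcss _ _
  have hFgood : ∀ m, Good (F m) := fun m => hcsg _ _
  have hFstage : ∀ s, ∃ m, st m = (s, 0) := by
    intro s
    induction s with
    | zero => exact ⟨0, hst0⟩
    | succ s ihs =>
      obtain ⟨m, hm⟩ := ihs
      have hseg : ∀ i, i < ks s → st (m + i) = (s, i) := by
        intro i
        induction i with
        | zero => intro _; rw [Nat.add_zero]; exact hm
        | succ i ihi =>
          intro hi
          have h1 := ihi (by omega)
          rw [show m + (i + 1) = (m + i) + 1 from rfl, hstS, h1]
          rw [show ((s, i) : ℕ × ℕ).2 = i from rfl, show ((s, i) : ℕ × ℕ).1 = s from rfl,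
            if_pos hi]
      have hlast := hseg (ks s - 1) (by have := hks s; omega)
      refine ⟨m + ks s, ?_⟩
      rw [show m + ks s = (m + (ks s - 1)) + 1 by have := hks s; omega, hstS, hlast]
      rw [show ((s, ks s - 1) : ℕ × ℕ).2 = ks s - 1 from rfl,
        show ((s, ks s - 1) : ℕ × ℕ).1 = s from rfl, if_neg (by omega)]
  have hFmono : ∀ m m', m ≤ m' → F m ≤ F m' := by
    intro m m' h
    induction m' with
    | zero => rw [Nat.le_zero.mp h]
    | succ m' ihm =>
      by_cases h2 : m ≤ m'
      · exact le_trans (ihm h2) (isStepF_le _ _ (hFstep m'))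
      · rw [show m = m' + 1 by omega]
  have hFcof : ∀ g : ℕ →₀ ℕ, ∃ m, g ≤ F m := by
    have hFstage' : ∀ s, ∃ m, F m = (gs s).1 := by
      intro s
      obtain ⟨m, hm⟩ := hFstage s
      refine ⟨m, ?_⟩
      rw [hFdef]
      dsimp only
      rw [hm]
      exact hcs0 s
    have hcoord : ∀ n j, ∃ m, j ≤ F m n := by
      intro n j
      obtain ⟨s, hs⟩ := hgscof n j
      obtain ⟨m, hm⟩ := hFstage' s
      refine ⟨m, ?_⟩
      rw [hm]
      omega
    have hsupp : ∀ (t : Finset ℕ) (g : ℕ →₀ ℕ), g.support ⊆ t → ∃ m, g ≤ F m := by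
      intro t
      induction t using Finset.induction_on with
      | empty =>
        intro g hg
        have : g = 0 := by
          ext n
          by_contra hn
          exact absurd (hg (Finsupp.mem_support_iff.mpr hn)) (Finset.notMem_empty n)
        refine ⟨0, ?_⟩
        rw [this]
        exact Finsupp.le_def.mpr fun m => Nat.zero_le _
      | insert a t' hnot ih =>
        intro g hg
        obtain ⟨m₁, hm₁⟩ := ih (g.erase a) (by
          intro n hn
          rw [Finsupp.support_erase] at hn
          have h2 := hg (Finset.mem_of_mem_erase hn)
          rcases Finset.mem_insert.mp h2 with h3 | h3
          · exact absurd h3 (Finset.ne_of_mem_erase hn)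
          · exact h3)
        obtain ⟨m₂, hm₂⟩ := hcoord a (g a)
        refine ⟨max m₁ m₂, Finsupp.le_def.mpr fun n => ?_⟩
        by_cases h : n = a
        · rw [h]
          exact le_trans hm₂ (Finsupp.le_def.mp (hFmono m₂ _ (le_max_right _ _)) a)
        · have herase : (g.erase a) n = g n := Finsupp.erase_ne h
          rw [← herase]
          exact le_trans (Finsupp.le_def.mp hm₁ n)
            (Finsupp.le_def.mp (hFmono m₁ _ (le_max_left _ _)) n)
    intro g
    exact hsupp g.support g (subset_refl _)
  -- final assembly
  refine ⟨fun m => Tspan (F m), ?_, ?_, fun m => hTfg (F m), ?_, ?_⟩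
  · dsimp only
    rw [hF0, hT0]
  · intro m
    exact hTmono _ _ (isStepF_le _ _ (hFstep m))
  · rw [eq_top_iff]
    intro z _
    have hz2 : z ∈ ⨆ n, N n := by rw [hsup]; exact Submodule.mem_top
    obtain ⟨n, hn⟩ := (Submodule.mem_iSup_of_directed _ (Nmono.directed_le)).mp hz2
    obtain ⟨g, _, hgT⟩ := fact1 n z hn
    obtain ⟨m, hm⟩ := hFcof g
    exact Submodule.mem_iSup_of_mem m (hTmono _ _ hm hgT)
  · intro m
    dsimp only
    rcases hFstep m with heq | ⟨n₀, heq⟩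
    · exact ⟨PEmpty.{v+1}, quot_pempty P _ _ (le_of_eq (congrArg Tspan heq))⟩
    · have hj₀ : (F (m + 1)) n₀ = (F m) n₀ + 1 := by
        rw [heq, Finsupp.add_apply, Finsupp.single_apply, if_pos rfl]
      have hDlef : Dfun n₀ ((F m) n₀) ≤ F m := by
        have hD := hFgood (m + 1) n₀ ((F m) n₀) (by rw [hj₀]; omega)
        refine Finsupp.le_def.mpr fun m' => ?_
        have hd := Finsupp.le_def.mp hD m'
        rw [heq, Finsupp.add_apply, Finsupp.single_apply] at hd
        by_cases h : n₀ = m'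
        · rw [← h]
          exact hD2 n₀ ((F m) n₀)
        · rw [if_neg h, add_zero] at hd
          exact hd
      have hTdec : Tspan (F (m + 1)) = Tspan (F m) ⊔
          Submodule.span R {y n₀ ((F m) n₀)} := by
        rw [heq]
        exact hTsucc (F m) n₀
      by_cases hred : y n₀ ((F m) n₀) ∈ N n₀ ⊔ Sp n₀ ((F m) n₀)
      · refine ⟨PEmpty.{v+1}, quot_pempty P _ _ ?_⟩
        rw [hTdec]
        refine sup_le le_rfl ?_
        rw [Submodule.span_le, Set.singleton_subset_iff]
        exact hTmono _ _ hDlef (hD4 n₀ ((F m) n₀) hred)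
      · refine ⟨PUnit.{v+1}, quot_punit P (Tspan (F m)) (Tspan (F (m + 1)))
          (y n₀ ((F m) n₀)) ?_ ?_ ?_⟩
        · rw [hTdec]
          exact Submodule.mem_sup_right (Submodule.mem_span_singleton_self _)
        · rw [hTdec]
        · intro r
          constructor
          · intro hr
            have hzN2 : r • y n₀ ((F m) n₀) ∈ N (n₀ + 1) :=
              Submodule.smul_mem _ r (C0 n₀ ((F m) n₀))
            have hrw := RW (wt (F m)) (F m) rfl (hFgood m) n₀ _ hr hzN2
            have hle2 : Tspan ((F m).filter (fun m' => m' ≤ n₀)) ≤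
                N n₀ ⊔ Sp n₀ ((F m) n₀) := by
              refine iSup_le fun n => ?_
              have happ : ((F m).filter (fun m' => m' ≤ n₀)) n =
                  if n ≤ n₀ then (F m) n else 0 := by
                rw [Finsupp.filter_apply]
              rcases lt_trichotomy n n₀ with hlt | heq2 | hgt
              · rw [happ, if_pos (by omega)]
                exact le_trans (le_trans (hSpN n ((F m) n)) (Nmono (by omega))) le_sup_left
              · rw [happ, if_pos (by omega), heq2]
                exact le_sup_right
              · rw [happ, if_neg (by omega), hSp0]
                exact bot_le
            rcases C2 n₀ ((F m) n₀) r (hle2 hrw) with h | h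
            · exact h
            · exact absurd h hred
          · intro hrP
            exact hTmono _ _ hDlef (hD3 n₀ ((F m) n₀) r hrP)
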